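/- Let (H, Φ, R) be a quasitriangular quasi-bialgebra over a field k. Then the product of H*_R is quasi-associative with respect to the associator Φ acting on both sides: for all f, g, l ∈ H*, (f·g)·l = Σ (X¹⇀f↼Y³)·((X²⇀g↼Y²)·(X³⇀l↼Y¹)), where Φ = Σ X¹⊗X²⊗X³ = Σ Y¹⊗Y²⊗Y³ denote two independent copies of the associator. -/

import Mathlib

open TensorProduct LinearMap

noncomputable section

/-- Left regular action of `H` on its dual: `(h ⇀ p)(x) = p (x * h)`. -/
def lact {k H : Type*} [Field k] [Ring H] [Algebra k H]
    (h : H) (p : Module.Dual k H) : Module.Dual k H :=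
  p ∘ₗ LinearMap.mulRight k h

/-- Right regular action of `H` on its dual: `(p ↼ h)(x) = p (h * x)`. -/
def ract {k H : Type*} [Field k] [Ring H] [Algebra k H]
    (h : H) (p : Module.Dual k H) : Module.Dual k H :=
  p ∘ₗ LinearMap.mulLeft k h

variable (k H : Type*) [Field k] [Ring H] [Algebra k H]

/-- `R ⊗ 1` viewed in `H ⊗ (H ⊗ H)` (the element `R₁₂`). -/
def leg12 (R : H ⊗[k] H) : H ⊗[k] (H ⊗[k] H) :=
  TensorProduct.assoc k H H H (R ⊗ₜ[k] (1 : H))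

/-- The element `R₂₃ = 1 ⊗ R` of `H ⊗ (H ⊗ H)`. -/
def leg23 (R : H ⊗[k] H) : H ⊗[k] (H ⊗[k] H) := (1 : H) ⊗ₜ[k] R

/-- The element `R₁₃` of `H ⊗ (H ⊗ H)`. -/
def leg13 (R : H ⊗[k] H) : H ⊗[k] (H ⊗[k] H) :=
  lTensor H (TensorProduct.comm k H H).toLinearMap (leg12 k H R)

/-- `x ⊗ y ⊗ z ↦ y ⊗ x ⊗ z`. -/
def permYXZ : H ⊗[k] (H ⊗[k] H) →ₗ[k] H ⊗[k] (H ⊗[k] H) :=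
  (TensorProduct.assoc k H H H).toLinearMap
    ∘ₗ rTensor H (TensorProduct.comm k H H).toLinearMap
    ∘ₗ (TensorProduct.assoc k H H H).symm.toLinearMap

/-- `x ⊗ y ⊗ z ↦ x ⊗ z ⊗ y`. -/
def permXZY : H ⊗[k] (H ⊗[k] H) →ₗ[k] H ⊗[k] (H ⊗[k] H) :=
  lTensor H (TensorProduct.comm k H H).toLinearMap

/-- `x ⊗ y ⊗ z ↦ y ⊗ z ⊗ x`. -/
def permYZX : H ⊗[k] (H ⊗[k] H) →ₗ[k] H ⊗[k] (H ⊗[k] H) :=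
  permXZY k H ∘ₗ permYXZ k H

/-- `x ⊗ y ⊗ z ↦ z ⊗ x ⊗ y`. -/
def permZXY : H ⊗[k] (H ⊗[k] H) →ₗ[k] H ⊗[k] (H ⊗[k] H) :=
  permYXZ k H ∘ₗ permXZY k H

/-- A quasitriangular quasi-bialgebra `(H, Δ, ε, Φ, R)` over the field `k`. -/
structure QTQB where
  /-- the comultiplication (an algebra map) -/
  Δ : H →ₐ[k] H ⊗[k] H
  /-- the counit (an algebra map) -/
  ε : H →ₐ[k] k
  /-- the associator -/
  Φ : H ⊗[k] (H ⊗[k] H)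
  /-- the inverse of the associator -/
  Φinv : H ⊗[k] (H ⊗[k] H)
  Φ_right_inv : Φ * Φinv = 1
  Φ_left_inv : Φinv * Φ = 1
  /-- `(id ⊗ Δ)(Δ(h)) = Φ ((Δ ⊗ id)(Δ(h))) Φ⁻¹` -/
  quasi_coassoc : ∀ h : H,
    lTensor H Δ.toLinearMap (Δ h)
      = Φ * (TensorProduct.assoc k H H H (rTensor H Δ.toLinearMap (Δ h))) * Φinv
  /-- `(ε ⊗ id)(Δ(h)) = h` -/
  counit_left : ∀ h : H, TensorProduct.lid k H (rTensor H ε.toLinearMap (Δ h)) = h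
  /-- `(id ⊗ ε)(Δ(h)) = h` -/
  counit_right : ∀ h : H, TensorProduct.rid k H (lTensor H ε.toLinearMap (Δ h)) = h
  /-- `(id ⊗ id ⊗ Δ)(Φ) (Δ ⊗ id ⊗ id)(Φ) = (1 ⊗ Φ)(id ⊗ Δ ⊗ id)(Φ)(Φ ⊗ 1)` -/
  pentagon :
    lTensor H (lTensor H Δ.toLinearMap) Φ
      * (TensorProduct.assoc k H H (H ⊗[k] H)).toLinearMap
          (rTensor (H ⊗[k] H) Δ.toLinearMap Φ)
      = ((1 : H) ⊗ₜ[k] Φ)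
        * lTensor H ((TensorProduct.assoc k H H H).toLinearMap ∘ₗ rTensor H Δ.toLinearMap) Φ
        * lTensor H (lTensor H ((TensorProduct.mk k H H).flip 1)) Φ
  /-- `(id ⊗ ε ⊗ id)(Φ) = 1 ⊗ 1` -/
  counit_mid :
    lTensor H ((TensorProduct.lid k H).toLinearMap ∘ₗ rTensor H ε.toLinearMap) Φ = 1
  /-- the R-matrix -/
  R : H ⊗[k] H
  /-- the inverse of the R-matrix -/
  Rinv : H ⊗[k] H
  R_right_inv : R * Rinv = 1
  R_left_inv : Rinv * R = 1
  /-- `(Δ ⊗ id)(R) = Φ₃₁₂ R₁₃ Φ⁻¹₁₃₂ R₂₃ Φ` -/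
  qt1 : TensorProduct.assoc k H H H (rTensor H Δ.toLinearMap R)
      = permYZX k H Φ * leg13 k H R * permXZY k H Φinv * leg23 k H R * Φ
  /-- `(id ⊗ Δ)(R) = Φ⁻¹₂₃₁ R₁₃ Φ₂₁₃ R₁₂ Φ⁻¹` -/
  qt2 : lTensor H Δ.toLinearMap R
      = permZXY k H Φinv * leg13 k H R * permYXZ k H Φ * leg12 k H R * Φinv
  /-- `Δᶜᵒᵖ(h) R = R Δ(h)` -/
  qt3 : ∀ h : H, (TensorProduct.comm k H H) (Δ h) * R = R * Δ h

variable {k H}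

/-- The multiplication of `H*_R`: `(f · g)(h) = Σ g(h₁ R²) f(h₂ R¹)`,
i.e. `f · g = Σ (R² ⇀ g)(R¹ ⇀ f)`. -/
def QTQB.mulR (Q : QTQB k H) (f g : Module.Dual k H) : Module.Dual k H :=
  LinearMap.mul' k k ∘ₗ TensorProduct.map g f
    ∘ₗ LinearMap.mulRight k ((TensorProduct.comm k H H) Q.R) ∘ₗ Q.Δ.toLinearMap

namespace QA

variable {k H : Type*} [Field k] [Ring H] [Algebra k H]

/-! ### Permutations of the triple tensor product as algebra equivalences -/

/-- swap legs 1,2 -/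
def s12 : H ⊗[k] (H ⊗[k] H) ≃ₐ[k] H ⊗[k] (H ⊗[k] H) :=
  (Algebra.TensorProduct.assoc k k k H H H).symm.trans
    ((Algebra.TensorProduct.congr (Algebra.TensorProduct.comm k H H) AlgEquiv.refl).trans
      (Algebra.TensorProduct.assoc k k k H H H))

/-- swap legs 2,3 -/
def s23 : H ⊗[k] (H ⊗[k] H) ≃ₐ[k] H ⊗[k] (H ⊗[k] H) :=
  Algebra.TensorProduct.congr AlgEquiv.refl (Algebra.TensorProduct.comm k H H)

/-- swap legs 1,3 -/
def s13 : H ⊗[k] (H ⊗[k] H) ≃ₐ[k] H ⊗[k] (H ⊗[k] H) :=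
  (s12).trans ((s23).trans (s12))

lemma s12_tmul (x y z : H) : s12 (x ⊗ₜ[k] (y ⊗ₜ z)) = y ⊗ₜ (x ⊗ₜ z) := by
  simp [s12, Algebra.TensorProduct.assoc_symm_tmul]

lemma s23_tmul (x y z : H) : s23 (x ⊗ₜ[k] (y ⊗ₜ z)) = x ⊗ₜ (z ⊗ₜ y) := by
  simp [s23]

lemma s13_apply (w : H ⊗[k] (H ⊗[k] H)) : s13 w = s12 (s23 (s12 w)) := rfl

lemma s13_tmul (x y z : H) : s13 (x ⊗ₜ[k] (y ⊗ₜ z)) = z ⊗ₜ (y ⊗ₜ x) := by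
  rw [s13_apply, s12_tmul, s23_tmul, s12_tmul]


lemma assoc_eq (w : (H ⊗[k] H) ⊗[k] H) :
    TensorProduct.assoc k H H H w = Algebra.TensorProduct.assoc k k k H H H w := rfl

lemma comm_eq (x : H ⊗[k] H) :
    TensorProduct.comm k H H x = Algebra.TensorProduct.comm k H H x := rfl

/-- extensionality for linear maps out of the triple tensor product -/
lemma ext_T {M : Type*} [AddCommMonoid M] [Module k M]
    {f g : H ⊗[k] (H ⊗[k] H) →ₗ[k] M}
    (h : ∀ x y z : H, f (x ⊗ₜ (y ⊗ₜ z)) = g (x ⊗ₜ (y ⊗ₜ z))) : f = g := by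
  apply TensorProduct.ext'
  intro x u
  induction u using TensorProduct.induction_on with
  | zero => simp [TensorProduct.tmul_zero]
  | tmul y z => exact h x y z
  | add u v hu hv => rw [TensorProduct.tmul_add, map_add, map_add, hu, hv]

lemma s12_s12 (w : H ⊗[k] (H ⊗[k] H)) : s12 (s12 w) = w := by
  have h : (s12 (k := k) (H := H)).toLinearMap ∘ₗ (s12).toLinearMap = LinearMap.id :=
    ext_T fun x y z => by simp [s12_tmul]
  exact LinearMap.congr_fun h w

lemma s23_s23 (w : H ⊗[k] (H ⊗[k] H)) : s23 (s23 w) = w := by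
  have h : (s23 (k := k) (H := H)).toLinearMap ∘ₗ (s23).toLinearMap = LinearMap.id :=
    ext_T fun x y z => by simp [s23_tmul]
  exact LinearMap.congr_fun h w

lemma braid (w : H ⊗[k] (H ⊗[k] H)) : s12 (s23 (s12 w)) = s23 (s12 (s23 w)) := by
  have h : (s12 (k := k) (H := H)).toLinearMap ∘ₗ (s23).toLinearMap ∘ₗ (s12).toLinearMap
      = (s23).toLinearMap ∘ₗ (s12).toLinearMap ∘ₗ (s23).toLinearMap :=
    ext_T fun x y z => by simp [s12_tmul, s23_tmul]
  exact LinearMap.congr_fun h w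

lemma s13_s12 (w : H ⊗[k] (H ⊗[k] H)) : s13 (s12 w) = s12 (s23 w) := by
  rw [s13_apply, s12_s12]

lemma s13_s23 (w : H ⊗[k] (H ⊗[k] H)) : s13 (s23 w) = s23 (s12 w) := by
  rw [s13_apply, ← braid, s12_s12]

lemma s13_s13 (w : H ⊗[k] (H ⊗[k] H)) : s13 (s13 w) = w := by
  rw [s13_apply w, s13_apply, s12_s12, s23_s23, s12_s12]

/-! ### Relating the permutation linear maps of the statement to `s12, s23` -/

lemma permYXZ_eq (w : H ⊗[k] (H ⊗[k] H)) : permYXZ k H w = s12 w := by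
  have h : permYXZ k H = (s12 (k := k) (H := H)).toLinearMap :=
    ext_T fun x y z => by
      simp [permYXZ, s12_tmul, TensorProduct.assoc_symm_tmul]
  exact LinearMap.congr_fun h w

lemma permXZY_eq (w : H ⊗[k] (H ⊗[k] H)) : permXZY k H w = s23 w := by
  have h : permXZY k H = (s23 (k := k) (H := H)).toLinearMap :=
    ext_T fun x y z => by simp [permXZY, s23_tmul]
  exact LinearMap.congr_fun h w

lemma permYZX_eq (w : H ⊗[k] (H ⊗[k] H)) : permYZX k H w = s23 (s12 w) := by
  rw [permYZX, LinearMap.comp_apply, permYXZ_eq, permXZY_eq]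

lemma permZXY_eq (w : H ⊗[k] (H ⊗[k] H)) : permZXY k H w = s12 (s23 w) := by
  rw [permZXY, LinearMap.comp_apply, permXZY_eq, permYXZ_eq]

/-! ### The legs -/

lemma leg12_tmul (a b : H) : leg12 k H (a ⊗ₜ b) = a ⊗ₜ (b ⊗ₜ (1 : H)) := by
  simp [leg12]

lemma leg13_tmul (a b : H) : leg13 k H (a ⊗ₜ b) = a ⊗ₜ ((1 : H) ⊗ₜ b) := by
  simp [leg13, leg12]

/-- `leg12` as a linear map. -/
def L12 : H ⊗[k] H →ₗ[k] H ⊗[k] (H ⊗[k] H) :=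
  (TensorProduct.assoc k H H H).toLinearMap ∘ₗ (TensorProduct.mk k (H ⊗[k] H) H).flip 1

/-- `leg23` as a linear map. -/
def L23 : H ⊗[k] H →ₗ[k] H ⊗[k] (H ⊗[k] H) := TensorProduct.mk k H (H ⊗[k] H) 1

/-- `leg13` as a linear map. -/
def L13 : H ⊗[k] H →ₗ[k] H ⊗[k] (H ⊗[k] H) :=
  lTensor H (TensorProduct.comm k H H).toLinearMap ∘ₗ L12

lemma leg12_eq (x : H ⊗[k] H) : leg12 k H x = L12 x := rfl
lemma leg23_eq (x : H ⊗[k] H) : leg23 k H x = L23 x := rfl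
lemma leg13_eq (x : H ⊗[k] H) : leg13 k H x = L13 x := rfl

lemma s12_leg13 (x : H ⊗[k] H) : s12 (leg13 k H x) = leg23 k H x := by
  have h : (s12 (k := k) (H := H)).toLinearMap ∘ₗ L13 = L23 :=
    TensorProduct.ext' fun a b => by
      simp [L13, L12, L23, leg12_eq, s12_tmul]
  rw [leg13_eq, leg23_eq]
  exact LinearMap.congr_fun h x

lemma s12_leg23 (x : H ⊗[k] H) : s12 (leg23 k H x) = leg13 k H x := by
  have h : (s12 (k := k) (H := H)).toLinearMap ∘ₗ L23 = L13 :=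
    TensorProduct.ext' fun a b => by
      simp [L13, L12, L23, s12_tmul]
  rw [leg13_eq, leg23_eq]
  exact LinearMap.congr_fun h x

lemma s13_leg12 (x : H ⊗[k] H) :
    s13 (leg12 k H x) = leg23 k H (TensorProduct.comm k H H x) := by
  have h : (s13 (k := k) (H := H)).toLinearMap ∘ₗ L12
      = L23 ∘ₗ (TensorProduct.comm k H H).toLinearMap :=
    TensorProduct.ext' fun a b => by
      simp [L12, L23, s13_tmul]
  rw [leg12_eq, leg23_eq]
  exact LinearMap.congr_fun h x

lemma s13_leg23 (x : H ⊗[k] H) :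
    s13 (leg23 k H x) = leg12 k H (TensorProduct.comm k H H x) := by
  have h : (s13 (k := k) (H := H)).toLinearMap ∘ₗ L23
      = L12 ∘ₗ (TensorProduct.comm k H H).toLinearMap :=
    TensorProduct.ext' fun a b => by
      simp [L12, L23, s13_tmul]
  rw [leg12_eq, leg23_eq]
  exact LinearMap.congr_fun h x


/-! ### The two leg-comultiplications as algebra maps -/

/-- `id ⊗ Δ` as an algebra hom. -/
def DL (Q : QTQB k H) : H ⊗[k] H →ₐ[k] H ⊗[k] (H ⊗[k] H) :=
  Algebra.TensorProduct.map (AlgHom.id k H) Q.Δ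

/-- `assoc ∘ (Δ ⊗ id)` as an algebra hom. -/
def DR (Q : QTQB k H) : H ⊗[k] H →ₐ[k] H ⊗[k] (H ⊗[k] H) :=
  (Algebra.TensorProduct.assoc k k k H H H).toAlgHom.comp
    (Algebra.TensorProduct.map Q.Δ (AlgHom.id k H))

lemma DL_eq (Q : QTQB k H) (x : H ⊗[k] H) :
    lTensor H Q.Δ.toLinearMap x = DL Q x := by
  have h : lTensor H Q.Δ.toLinearMap = (DL Q).toLinearMap :=
    TensorProduct.ext' fun a b => by simp [DL]
  exact LinearMap.congr_fun h x

lemma DR_eq (Q : QTQB k H) (x : H ⊗[k] H) :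
    TensorProduct.assoc k H H H (rTensor H Q.Δ.toLinearMap x) = DR Q x := by
  have h : (TensorProduct.assoc k H H H).toLinearMap ∘ₗ rTensor H Q.Δ.toLinearMap
      = (DR Q).toLinearMap :=
    TensorProduct.ext' fun a b => by simp [DR, assoc_eq]; rfl
  exact LinearMap.congr_fun h x

lemma DL_tmul (Q : QTQB k H) (a b : H) : DL Q (a ⊗ₜ b) = a ⊗ₜ Q.Δ b := by simp [DL]

lemma DR_tmul (Q : QTQB k H) (a b : H) :
    DR Q (a ⊗ₜ b) = TensorProduct.assoc k H H H (Q.Δ a ⊗ₜ b) := by simp [DR, assoc_eq]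

/-! ### auxiliary pointwise computations -/

lemma s12_assoc (u : H ⊗[k] H) (b : H) :
    s12 (TensorProduct.assoc k H H H (u ⊗ₜ b))
      = TensorProduct.assoc k H H H ((TensorProduct.comm k H H u) ⊗ₜ b) := by
  induction u using TensorProduct.induction_on with
  | zero => simp [assoc_eq, comm_eq]
  | tmul x y => simp [s12_tmul, assoc_eq, comm_eq]
  | add u v hu hv =>
      simp only [assoc_eq, comm_eq] at hu hv ⊢
      simp only [add_tmul, map_add, hu, hv]

lemma s23_tmul_left (a : H) (u : H ⊗[k] H) :
    s23 (a ⊗ₜ[k] u) = a ⊗ₜ (TensorProduct.comm k H H u) := by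
  induction u using TensorProduct.induction_on with
  | zero => simp [comm_eq]
  | tmul x y => simp [s23_tmul, comm_eq]
  | add u v hu hv => simp only [comm_eq, TensorProduct.tmul_add, map_add, hu, hv]

lemma czxy_assoc (u : H ⊗[k] H) (b : H) :
    s12 (s23 (TensorProduct.assoc k H H H (u ⊗ₜ b))) = b ⊗ₜ[k] u := by
  induction u using TensorProduct.induction_on with
  | zero => simp [assoc_eq]
  | tmul x y => simp [s23_tmul, s12_tmul, assoc_eq]
  | add u v hu hv =>
      simp only [assoc_eq] at hu hv ⊢
      simp only [add_tmul, map_add, hu, hv, TensorProduct.tmul_add]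

lemma cyzx_tmul_left (a : H) (u : H ⊗[k] H) :
    s23 (s12 (a ⊗ₜ[k] u)) = TensorProduct.assoc k H H H (u ⊗ₜ a) := by
  induction u using TensorProduct.induction_on with
  | zero => simp [assoc_eq]
  | tmul x y => simp [s23_tmul, s12_tmul, assoc_eq]
  | add u v hu hv =>
      simp only [assoc_eq] at hu hv ⊢
      simp only [TensorProduct.tmul_add, map_add, hu, hv, add_tmul]

lemma assoc_mul (w₁ w₂ : (H ⊗[k] H) ⊗[k] H) :
    TensorProduct.assoc k H H H (w₁ * w₂)
      = TensorProduct.assoc k H H H w₁ * TensorProduct.assoc k H H H w₂ := by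
  rw [assoc_eq, assoc_eq, assoc_eq]
  exact map_mul (Algebra.TensorProduct.assoc k k k H H H) w₁ w₂

/-! ### Extension of `qt3` to the two tensor legs -/

lemma ext3 (Q : QTQB k H) (x : H ⊗[k] H) :
    s12 (DR Q x) * leg12 k H Q.R = leg12 k H Q.R * DR Q x := by
  have h : (mulRight k (leg12 k H Q.R)) ∘ₗ (s12 (k := k) (H := H)).toLinearMap
        ∘ₗ (DR Q).toLinearMap
      = (mulLeft k (leg12 k H Q.R)) ∘ₗ (DR Q).toLinearMap := by
    apply TensorProduct.ext'
    intro a b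
    simp only [LinearMap.comp_apply, AlgEquiv.toLinearMap_apply, AlgHom.toLinearMap_apply,
      mulRight_apply, mulLeft_apply, DR_tmul]
    rw [s12_assoc]
    have h12 : leg12 k H Q.R = TensorProduct.assoc k H H H (Q.R ⊗ₜ 1) := rfl
    rw [h12, ← assoc_mul, ← assoc_mul, Algebra.TensorProduct.tmul_mul_tmul,
      Algebra.TensorProduct.tmul_mul_tmul, Q.qt3 a, mul_one, one_mul]
  exact LinearMap.congr_fun h x

lemma ext4 (Q : QTQB k H) (x : H ⊗[k] H) :
    s23 (DL Q x) * leg23 k H Q.R = leg23 k H Q.R * DL Q x := by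
  have h : (mulRight k (leg23 k H Q.R)) ∘ₗ (s23 (k := k) (H := H)).toLinearMap
        ∘ₗ (DL Q).toLinearMap
      = (mulLeft k (leg23 k H Q.R)) ∘ₗ (DL Q).toLinearMap := by
    apply TensorProduct.ext'
    intro a b
    simp only [LinearMap.comp_apply, AlgEquiv.toLinearMap_apply, AlgHom.toLinearMap_apply,
      mulRight_apply, mulLeft_apply, DL_tmul]
    rw [s23_tmul_left]
    have h23 : leg23 k H Q.R = (1 : H) ⊗ₜ[k] Q.R := rfl
    rw [h23, Algebra.TensorProduct.tmul_mul_tmul, Algebra.TensorProduct.tmul_mul_tmul,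
      Q.qt3 b, mul_one, one_mul]
  exact LinearMap.congr_fun h x


/-! ### The quasitriangularity axioms, rewritten -/

lemma A_eq (Q : QTQB k H) :
    DR Q Q.R = s23 (s12 Q.Φ) * leg13 k H Q.R * s23 Q.Φinv * leg23 k H Q.R * Q.Φ := by
  rw [← DR_eq, Q.qt1, permYZX_eq, permXZY_eq]

lemma B_eq (Q : QTQB k H) :
    DL Q Q.R = s12 (s23 Q.Φinv) * leg13 k H Q.R * s12 Q.Φ * leg12 k H Q.R * Q.Φinv := by
  rw [← DL_eq, Q.qt2, permZXY_eq, permYXZ_eq]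

/-! ### The key identity -/

lemma h7 (Q : QTQB k H) :
    s12 (DR Q Q.R) * leg12 k H Q.R
      = s13 Q.Φ * (s23 (DL Q Q.R) * (leg23 k H Q.R * Q.Φ)) :=
  calc s12 (DR Q Q.R) * leg12 k H Q.R
      = s13 Q.Φ * (leg23 k H Q.R * (s12 (s23 Q.Φinv)
          * (leg13 k H Q.R * (s12 Q.Φ * leg12 k H Q.R)))) := by
        rw [A_eq]
        simp only [map_mul, s12_leg13, s12_leg23, ← s13_apply, mul_assoc]
    _ = s13 Q.Φ * (leg23 k H Q.R * (DL Q Q.R * Q.Φ)) := by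
        rw [B_eq]
        simp only [mul_assoc, Q.Φ_left_inv, mul_one]
    _ = s13 Q.Φ * (s23 (DL Q Q.R) * (leg23 k H Q.R * Q.Φ)) := by
        conv_rhs => rw [← mul_assoc (s23 (DL Q Q.R))]
        rw [ext4 Q Q.R]
        simp only [mul_assoc]

lemma keyK (Q : QTQB k H) :
    s12 (s23 (DR Q Q.R)) * leg23 k H (TensorProduct.comm k H H Q.R)
      = Q.Φ * (s23 (s12 (DL Q Q.R))
          * (leg12 k H (TensorProduct.comm k H H Q.R) * s13 Q.Φ)) := by
  have h := congrArg (s13 (k := k) (H := H)) (h7 Q)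
  simp only [map_mul] at h
  rw [s13_s12, s13_leg12, s13_s13, s13_s23, s13_leg23] at h
  exact h

lemma keyK' (Q : QTQB k H) :
    Q.Φinv * (s12 (s23 (DR Q Q.R)) * leg23 k H (TensorProduct.comm k H H Q.R))
      = s23 (s12 (DL Q Q.R)) * (leg12 k H (TensorProduct.comm k H H Q.R) * s13 Q.Φ) := by
  rw [keyK, ← mul_assoc, Q.Φ_left_inv, one_mul]

/-! ### Interaction of DL/DR with the flip -/

lemma DL_comm (Q : QTQB k H) (x : H ⊗[k] H) :
    DL Q (TensorProduct.comm k H H x) = s12 (s23 (DR Q x)) := by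
  have h : (DL Q).toLinearMap ∘ₗ (TensorProduct.comm k H H).toLinearMap
      = (s12 (k := k) (H := H)).toLinearMap ∘ₗ (s23 (k := k) (H := H)).toLinearMap
          ∘ₗ (DR Q).toLinearMap :=
    TensorProduct.ext' fun a b => by
      simp only [LinearMap.comp_apply, LinearEquiv.coe_coe, AlgEquiv.toLinearMap_apply,
        AlgHom.toLinearMap_apply, TensorProduct.comm_tmul, DL_tmul, DR_tmul]
      rw [czxy_assoc]
  exact LinearMap.congr_fun h x

lemma DR_comm (Q : QTQB k H) (x : H ⊗[k] H) :
    DR Q (TensorProduct.comm k H H x) = s23 (s12 (DL Q x)) := by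
  have h : (DR Q).toLinearMap ∘ₗ (TensorProduct.comm k H H).toLinearMap
      = (s23 (k := k) (H := H)).toLinearMap ∘ₗ (s12 (k := k) (H := H)).toLinearMap
          ∘ₗ (DL Q).toLinearMap :=
    TensorProduct.ext' fun a b => by
      simp only [LinearMap.comp_apply, LinearEquiv.coe_coe, AlgEquiv.toLinearMap_apply,
        AlgHom.toLinearMap_apply, TensorProduct.comm_tmul, DL_tmul, DR_tmul]
      rw [cyzx_tmul_left]
  exact LinearMap.congr_fun h x

/-! ### The main element identity -/

lemma main_identity (Q : QTQB k H) (h : H) :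
    DL Q (Q.Δ h) * (DL Q (TensorProduct.comm k H H Q.R)
        * leg23 k H (TensorProduct.comm k H H Q.R))
      = Q.Φ * (DR Q (Q.Δ h) * (DR Q (TensorProduct.comm k H H Q.R)
          * (leg12 k H (TensorProduct.comm k H H Q.R) * s13 Q.Φ))) := by
  have hqc : DL Q (Q.Δ h) = Q.Φ * DR Q (Q.Δ h) * Q.Φinv := by
    rw [← DL_eq, ← DR_eq]; exact Q.quasi_coassoc h
  rw [hqc, DL_comm, DR_comm]
  simp only [mul_assoc]
  rw [keyK' Q]


/-! ### Evaluation functionals -/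

/-- The functional `x ⊗ y ⊗ z ↦ p x * q y * r z`. -/
def E3 (p q r : Module.Dual k H) : H ⊗[k] (H ⊗[k] H) →ₗ[k] k :=
  LinearMap.mul' k k ∘ₗ TensorProduct.map p (LinearMap.mul' k k ∘ₗ TensorProduct.map q r)

lemma E3_tmul (p q r : Module.Dual k H) (x y z : H) :
    E3 p q r (x ⊗ₜ (y ⊗ₜ z)) = p x * (q y * r z) := by
  simp [E3, LinearMap.mul'_apply]

lemma E3_tmul_left (p q r : Module.Dual k H) (a : H) (u : H ⊗[k] H) :
    E3 p q r (a ⊗ₜ u)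
      = p a * (LinearMap.mul' k k (TensorProduct.map q r u)) := by
  simp [E3, LinearMap.mul'_apply]

lemma E3_assoc (p q r : Module.Dual k H) (u : H ⊗[k] H) (b : H) :
    E3 p q r (TensorProduct.assoc k H H H (u ⊗ₜ b))
      = LinearMap.mul' k k (TensorProduct.map p q u) * r b := by
  induction u using TensorProduct.induction_on with
  | zero => simp [assoc_eq]
  | tmul x y => simp [assoc_eq, E3_tmul, mul_assoc]
  | add u v hu hv =>
      simp only [assoc_eq] at hu hv ⊢
      simp only [add_tmul, map_add, hu, hv, add_mul]

lemma evalL (Q : QTQB k H) (p f g : Module.Dual k H) (w : H ⊗[k] H) :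
    LinearMap.mul' k k (TensorProduct.map p (Q.mulR f g) w)
      = E3 p g f (lTensor H
          (mulRight k (TensorProduct.comm k H H Q.R) ∘ₗ Q.Δ.toLinearMap) w) := by
  have h : (LinearMap.mul' k k) ∘ₗ TensorProduct.map p (Q.mulR f g)
      = E3 p g f ∘ₗ lTensor H
          (mulRight k (TensorProduct.comm k H H Q.R) ∘ₗ Q.Δ.toLinearMap) :=
    TensorProduct.ext' fun a b => by
      simp only [LinearMap.comp_apply, TensorProduct.map_tmul, lTensor_tmul,
        LinearMap.mul'_apply, E3_tmul_left]
      rfl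
  exact LinearMap.congr_fun h w

lemma evalR (Q : QTQB k H) (C A B : Module.Dual k H) (w : H ⊗[k] H) :
    LinearMap.mul' k k (TensorProduct.map (Q.mulR A B) C w)
      = E3 B A C (TensorProduct.assoc k H H H (rTensor H
          (mulRight k (TensorProduct.comm k H H Q.R) ∘ₗ Q.Δ.toLinearMap) w)) := by
  have h : (LinearMap.mul' k k) ∘ₗ TensorProduct.map (Q.mulR A B) C
      = E3 B A C ∘ₗ (TensorProduct.assoc k H H H).toLinearMap ∘ₗ rTensor H
          (mulRight k (TensorProduct.comm k H H Q.R) ∘ₗ Q.Δ.toLinearMap) :=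
    TensorProduct.ext' fun a b => by
      simp only [LinearMap.comp_apply, TensorProduct.map_tmul, rTensor_tmul,
        LinearMap.mul'_apply, LinearEquiv.coe_coe]
      rw [E3_assoc]
      rfl
  exact LinearMap.congr_fun h w

lemma E3_conj (p q r : Module.Dual k H) (a₁ a₂ a₃ b₁ b₂ b₃ : H)
    (w : H ⊗[k] (H ⊗[k] H)) :
    E3 (lact a₁ (ract b₁ p)) (lact a₂ (ract b₂ q)) (lact a₃ (ract b₃ r)) w
      = E3 p q r ((b₁ ⊗ₜ[k] (b₂ ⊗ₜ[k] b₃)) * w * (a₁ ⊗ₜ[k] (a₂ ⊗ₜ[k] a₃))) := by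
  have h : E3 (lact a₁ (ract b₁ p)) (lact a₂ (ract b₂ q)) (lact a₃ (ract b₃ r))
      = E3 p q r ∘ₗ mulRight k (a₁ ⊗ₜ[k] (a₂ ⊗ₜ[k] a₃))
          ∘ₗ mulLeft k (b₁ ⊗ₜ[k] (b₂ ⊗ₜ[k] b₃)) :=
    ext_T fun x y z => by
      simp only [LinearMap.comp_apply, mulRight_apply, mulLeft_apply,
        Algebra.TensorProduct.tmul_mul_tmul, E3_tmul, lact, ract, mul_assoc]
  exact LinearMap.congr_fun h w

/-! ### composing with right multiplication inside tensors -/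

lemma lTensor_mulRight (Q : QTQB k H) (c : H ⊗[k] H) (w : H ⊗[k] H) :
    lTensor H (mulRight k c ∘ₗ Q.Δ.toLinearMap) w
      = lTensor H Q.Δ.toLinearMap w * ((1 : H) ⊗ₜ[k] c) := by
  have h : lTensor H (mulRight k c ∘ₗ Q.Δ.toLinearMap)
      = mulRight k ((1 : H) ⊗ₜ[k] c) ∘ₗ lTensor H Q.Δ.toLinearMap :=
    TensorProduct.ext' fun a b => by
      simp only [lTensor_tmul, LinearMap.comp_apply, mulRight_apply,
        Algebra.TensorProduct.tmul_mul_tmul, mul_one]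
  exact LinearMap.congr_fun h w

lemma rTensor_mulRight (Q : QTQB k H) (c : H ⊗[k] H) (w : H ⊗[k] H) :
    rTensor H (mulRight k c ∘ₗ Q.Δ.toLinearMap) w
      = rTensor H Q.Δ.toLinearMap w * (c ⊗ₜ[k] (1 : H)) := by
  have h : rTensor H (mulRight k c ∘ₗ Q.Δ.toLinearMap)
      = mulRight k (c ⊗ₜ[k] (1 : H)) ∘ₗ rTensor H Q.Δ.toLinearMap :=
    TensorProduct.ext' fun a b => by
      simp only [rTensor_tmul, LinearMap.comp_apply, mulRight_apply,
        Algebra.TensorProduct.tmul_mul_tmul, mul_one]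
  exact LinearMap.congr_fun h w


end QA

/-- Let `(H, Φ, R)` be a quasitriangular quasi-bialgebra over a field `k`.
Then the product of `H*_R` is quasi-associative with respect to the associator `Φ` acting
on both sides: for all `f, g, l ∈ H*`,
`(f·g)·l = Σ (X¹ ⇀ f ↼ Y³) · ((X² ⇀ g ↼ Y²) · (X³ ⇀ l ↼ Y¹))`,
where `Φ = Σ X¹⊗X²⊗X³ = Σ Y¹⊗Y²⊗Y³` denote two independent (finite) representations
of the associator. -/
theorem heisenberg_quasi_associative
    {k H : Type*} [Field k] [Ring H] [Algebra k H] (Q : QTQB k H) :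
    ∀ (f g l : Module.Dual k H) (n m : ℕ)
      (X₁ X₂ X₃ : Fin n → H) (Y₁ Y₂ Y₃ : Fin m → H),
      Q.Φ = ∑ i, X₁ i ⊗ₜ[k] (X₂ i ⊗ₜ[k] X₃ i) →
      Q.Φ = ∑ j, Y₁ j ⊗ₜ[k] (Y₂ j ⊗ₜ[k] Y₃ j) →
      Q.mulR (Q.mulR f g) l
        = ∑ i, ∑ j, Q.mulR (lact (X₁ i) (ract (Y₃ j) f))
            (Q.mulR (lact (X₂ i) (ract (Y₂ j) g)) (lact (X₃ i) (ract (Y₁ j) l))) := by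
  intro f g l n m X₁ X₂ X₃ Y₁ Y₂ Y₃ hX hY
  apply LinearMap.ext
  intro h
  have hX13 : QA.s13 Q.Φ = ∑ i, X₃ i ⊗ₜ[k] (X₂ i ⊗ₜ[k] X₁ i) := by
    rw [hX, map_sum]
    exact Finset.sum_congr rfl fun i _ => QA.s13_tmul _ _ _
  -- the left-hand side
  have hL : Q.mulR (Q.mulR f g) l h
      = QA.E3 l g f (QA.DL Q (Q.Δ h) * (QA.DL Q (TensorProduct.comm k H H Q.R)
          * leg23 k H (TensorProduct.comm k H H Q.R))) := by
    have h0 : Q.mulR (Q.mulR f g) l h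
        = LinearMap.mul' k k (TensorProduct.map l (Q.mulR f g)
            (mulRight k (TensorProduct.comm k H H Q.R) (Q.Δ h))) := rfl
    have h1 : mulRight k (TensorProduct.comm k H H Q.R) (Q.Δ h)
        = Q.Δ h * TensorProduct.comm k H H Q.R := rfl
    rw [h0, h1, QA.evalL, QA.lTensor_mulRight, QA.DL_eq,
      map_mul (QA.DL Q) (Q.Δ h) (TensorProduct.comm k H H Q.R), mul_assoc]
    rfl
  -- the individual summands of the right-hand side
  have hterm : ∀ (i : Fin n) (j : Fin m),
      Q.mulR (lact (X₁ i) (ract (Y₃ j) f))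
          (Q.mulR (lact (X₂ i) (ract (Y₂ j) g)) (lact (X₃ i) (ract (Y₁ j) l))) h
        = QA.E3 l g f ((Y₁ j ⊗ₜ[k] (Y₂ j ⊗ₜ[k] Y₃ j))
            * (QA.DR Q (Q.Δ h) * QA.DR Q (TensorProduct.comm k H H Q.R)
                * leg12 k H (TensorProduct.comm k H H Q.R))
            * (X₃ i ⊗ₜ[k] (X₂ i ⊗ₜ[k] X₁ i))) := by
    intro i j
    have h0 : Q.mulR (lact (X₁ i) (ract (Y₃ j) f))
          (Q.mulR (lact (X₂ i) (ract (Y₂ j) g)) (lact (X₃ i) (ract (Y₁ j) l))) h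
        = LinearMap.mul' k k (TensorProduct.map
            (Q.mulR (lact (X₂ i) (ract (Y₂ j) g)) (lact (X₃ i) (ract (Y₁ j) l)))
            (lact (X₁ i) (ract (Y₃ j) f))
            (mulRight k (TensorProduct.comm k H H Q.R) (Q.Δ h))) := rfl
    have h1 : mulRight k (TensorProduct.comm k H H Q.R) (Q.Δ h)
        = Q.Δ h * TensorProduct.comm k H H Q.R := rfl
    have h2 : TensorProduct.assoc k H H H
          ((TensorProduct.comm k H H Q.R) ⊗ₜ[k] (1 : H))
        = leg12 k H (TensorProduct.comm k H H Q.R) := rfl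
    rw [h0, h1, QA.evalR, QA.rTensor_mulRight, QA.assoc_mul, QA.DR_eq,
      map_mul (QA.DR Q) (Q.Δ h) (TensorProduct.comm k H H Q.R), h2, QA.E3_conj]
  have hsum : (∑ i, ∑ j, Q.mulR (lact (X₁ i) (ract (Y₃ j) f))
      (Q.mulR (lact (X₂ i) (ract (Y₂ j) g)) (lact (X₃ i) (ract (Y₁ j) l)))) h
      = ∑ i, ∑ j, Q.mulR (lact (X₁ i) (ract (Y₃ j) f))
        (Q.mulR (lact (X₂ i) (ract (Y₂ j) g)) (lact (X₃ i) (ract (Y₁ j) l))) h := by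
    simp only [LinearMap.coe_sum, Finset.sum_apply]
  rw [hsum]
  simp only [hterm]
  have hcol : (∑ i, ∑ j, QA.E3 l g f ((Y₁ j ⊗ₜ[k] (Y₂ j ⊗ₜ[k] Y₃ j))
            * (QA.DR Q (Q.Δ h) * QA.DR Q (TensorProduct.comm k H H Q.R)
                * leg12 k H (TensorProduct.comm k H H Q.R))
            * (X₃ i ⊗ₜ[k] (X₂ i ⊗ₜ[k] X₁ i))))
      = QA.E3 l g f (Q.Φ * (QA.DR Q (Q.Δ h)
          * QA.DR Q (TensorProduct.comm k H H Q.R)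
          * leg12 k H (TensorProduct.comm k H H Q.R)) * QA.s13 Q.Φ) := by
    rw [hX13, Finset.mul_sum, map_sum]
    refine Finset.sum_congr rfl fun i _ => ?_
    rw [← map_sum]
    congr 1
    rw [← Finset.sum_mul, ← Finset.sum_mul, ← hY]
  rw [hcol, hL]
  congr 1
  rw [QA.main_identity Q h]
  simp only [mul_assoc]
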